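/- Let m ≥ 2 be an integer, and let Y_1, …, Y_m be independent random variables with Y_i ~ Geom(p_i) where p_i ∈ (0,1] for each i. Then P( Y_1 + ⋯ + Y_m > m² / (4 (p_1 + ⋯ + p_m)) ) ≥ 1/9. -/

import Mathlib

open MeasureTheory ProbabilityTheory
open scoped ENNReal NNReal

/-- The law of a geometric random variable with success probability `p`,
supported on the positive integers: `P(Y = k) = (1 - p)^(k-1) * p` for `k ≥ 1`. -/
noncomputable def geomMeasure (p : ℝ) : Measure ℕ :=
  Measure.count.withDensity
    (fun k => if 1 ≤ k then ENNReal.ofReal ((1 - p) ^ (k - 1) * p) else 0)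

lemma geom_lintegral (p : ℝ) (g : ℕ → ℝ≥0∞) :
    ∫⁻ k, g k ∂geomMeasure p
      = ∑' n : ℕ, ENNReal.ofReal ((1 - p) ^ n * p) * g (n + 1) := by
  rw [geomMeasure, lintegral_withDensity_eq_lintegral_mul _
      (Measurable.of_discrete) (Measurable.of_discrete)]
  rw [lintegral_count]
  simp only [Pi.mul_apply]
  have hsupp : Function.support (fun k : ℕ =>
      (if 1 ≤ k then ENNReal.ofReal ((1 - p) ^ (k - 1) * p) else 0) * g k)
      ⊆ Set.range Nat.succ := by
    intro k hk
    rcases Nat.eq_zero_or_pos k with h0 | h1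
    · exfalso; apply hk; subst h0; simp
    · exact ⟨k - 1, by omega⟩
  rw [← Function.Injective.tsum_eq Nat.succ_injective hsupp]
  apply tsum_congr; intro n
  simp [Nat.succ_eq_add_one]

lemma geom_sum_aux {p : ℝ} (hp : p ∈ Set.Ioc (0:ℝ) 1) :
    (∑' n : ℕ, (1 - p) ^ n * p * ((n:ℝ) + 1) = 1 / p) ∧
    (∑' n : ℕ, (1 - p) ^ n * p * ((n:ℝ) + 1) ^ 2 = (2 - p) / p ^ 2) := by
  obtain ⟨hp0, hp1⟩ := hp
  set r : ℝ := 1 - p with hr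
  have hr0 : 0 ≤ r := by linarith
  have hr1 : r < 1 := by linarith
  have hnorm : ‖r‖ < 1 := by rw [Real.norm_eq_abs, abs_of_nonneg hr0]; exact hr1
  have hgeo : ∑' n : ℕ, r ^ n = 1 / (1 - r) := by
    rw [tsum_geometric_of_lt_one hr0 hr1, one_div]
  have ht1 : ∑' n : ℕ, (n : ℝ) * r ^ n = r / (1 - r) ^ 2 :=
    tsum_coe_mul_geometric_of_norm_lt_one hnorm
  -- summabilities
  have s0 : Summable (fun n : ℕ => r ^ n) := summable_geometric_of_lt_one hr0 hr1
  have s1 : Summable (fun n : ℕ => (n : ℝ) * r ^ n) := by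
    have := summable_pow_mul_geometric_of_norm_lt_one 1 hnorm (R := ℝ)
    simpa using this
  have s2 : Summable (fun n : ℕ => (n : ℝ) ^ 2 * r ^ n) := by
    have := summable_pow_mul_geometric_of_norm_lt_one 2 hnorm (R := ℝ)
    simpa using this
  have h1p : (1 : ℝ) - r = p := by ring
  constructor
  · have : ∑' n : ℕ, (1 - p) ^ n * p * ((n:ℝ) + 1)
        = ∑' n : ℕ, p * ((n : ℝ) * r ^ n + r ^ n) := by
      apply tsum_congr; intro n; ring
    rw [this, tsum_mul_left, Summable.tsum_add s1 s0, ht1, hgeo, h1p]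
    field_simp
    rw [hr]; ring
  · -- t2 = ∑ n^2 r^n
    have key : ∑' n : ℕ, (n : ℝ) ^ 2 * r ^ n = r * (1 + r) / (1 - r) ^ 3 := by
      set t2 := ∑' n : ℕ, (n : ℝ) ^ 2 * r ^ n with ht2
      have hshift : t2 = ∑' n : ℕ, ((n : ℝ) + 1) ^ 2 * r ^ (n + 1) := by
        rw [ht2, Summable.tsum_eq_zero_add s2]
        push_cast
        ring_nf
      have hexp : ∑' n : ℕ, ((n : ℝ) + 1) ^ 2 * r ^ (n + 1)
          = r * (t2 + 2 * (r / (1 - r) ^ 2) + 1 / (1 - r)) := by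
        have : ∀ n : ℕ, ((n : ℝ) + 1) ^ 2 * r ^ (n + 1)
            = r * ((n : ℝ) ^ 2 * r ^ n + 2 * ((n : ℝ) * r ^ n) + r ^ n) := by
          intro n; ring
        rw [tsum_congr this, tsum_mul_left,
          Summable.tsum_add (by exact (s2.add (s1.mul_left 2))) s0,
          Summable.tsum_add s2 (s1.mul_left 2), tsum_mul_left, ht1, hgeo]
      have heq : t2 = r * (t2 + 2 * (r / (1 - r) ^ 2) + 1 / (1 - r)) :=
        hshift.trans hexp
      have h1r : (0:ℝ) < 1 - r := by linarith
      field_simp at heq ⊢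
      nlinarith [heq]
    have : ∑' n : ℕ, (1 - p) ^ n * p * ((n:ℝ) + 1) ^ 2
        = ∑' n : ℕ, p * ((n : ℝ) ^ 2 * r ^ n + 2 * ((n : ℝ) * r ^ n) + r ^ n) := by
      apply tsum_congr; intro n; ring
    rw [this, tsum_mul_left, Summable.tsum_add (s2.add (s1.mul_left 2)) s0,
      Summable.tsum_add s2 (s1.mul_left 2), tsum_mul_left, key, ht1, hgeo]
    have h1r : (0:ℝ) < 1 - r := by linarith
    rw [h1p] at *
    field_simp
    ring

lemma geom_summable {p : ℝ} (hp : p ∈ Set.Ioc (0:ℝ) 1) (k : ℕ) :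
    Summable (fun n : ℕ => (1 - p) ^ n * p * ((n:ℝ) + 1) ^ k) := by
  obtain ⟨hp0, hp1⟩ := hp
  have hnorm : ‖1 - p‖ < 1 := by
    rw [Real.norm_eq_abs, abs_of_nonneg (by linarith)]; linarith
  have base : ∀ j : ℕ, Summable (fun n : ℕ => (n:ℝ) ^ j * (1 - p) ^ n * (k.choose j) * p) :=
    fun j => ((summable_pow_mul_geometric_of_norm_lt_one j hnorm).mul_right _).mul_right _
  have hs : Summable (fun n : ℕ =>
      ∑ j ∈ Finset.range (k + 1), (n:ℝ) ^ j * (1 - p) ^ n * (k.choose j) * p) :=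
    summable_sum (fun j _ => base j)
  apply hs.congr
  intro n
  rw [add_pow, Finset.mul_sum]
  apply Finset.sum_congr rfl
  intro j hj
  simp
  ring

lemma geom_nonneg {p : ℝ} (hp : p ∈ Set.Ioc (0:ℝ) 1) (n : ℕ) (k : ℕ) :
    0 ≤ (1 - p) ^ n * p * ((n:ℝ) + 1) ^ k := by
  obtain ⟨hp0, hp1⟩ := hp
  have h1 : (0:ℝ) ≤ 1 - p := by linarith
  positivity

lemma geom_moment1 {p : ℝ} (hp : p ∈ Set.Ioc (0:ℝ) 1) :
    ∫⁻ k, (k : ℝ≥0∞) ∂geomMeasure p = ENNReal.ofReal (1 / p) := by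
  rw [geom_lintegral]
  have : ∀ n : ℕ, ENNReal.ofReal ((1 - p) ^ n * p) * ((n + 1 : ℕ) : ℝ≥0∞)
      = ENNReal.ofReal ((1 - p) ^ n * p * ((n:ℝ) + 1)) := by
    intro n
    rw [ENNReal.ofReal_mul (by nlinarith [hp.1, hp.2, pow_nonneg (by linarith [hp.2] : (0:ℝ) ≤ 1 - p) n] : (0:ℝ) ≤ (1-p)^n * p)]
    congr 1
    rw [← ENNReal.ofReal_natCast]
    congr 1
    push_cast; ring
  rw [tsum_congr this, ← ENNReal.ofReal_tsum_of_nonneg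
      (fun n => by simpa using geom_nonneg hp n 1) (by simpa using geom_summable hp 1)]
  congr 1
  simpa using (geom_sum_aux hp).1

lemma geom_moment2 {p : ℝ} (hp : p ∈ Set.Ioc (0:ℝ) 1) :
    ∫⁻ k, ((k : ℝ≥0∞)) ^ 2 ∂geomMeasure p ≤ 2 * ENNReal.ofReal (1 / p) ^ 2 := by
  rw [geom_lintegral]
  have : ∀ n : ℕ, ENNReal.ofReal ((1 - p) ^ n * p) * ((n + 1 : ℕ) : ℝ≥0∞) ^ 2
      = ENNReal.ofReal ((1 - p) ^ n * p * ((n:ℝ) + 1) ^ 2) := by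
    intro n
    rw [ENNReal.ofReal_mul (by nlinarith [hp.1, hp.2, pow_nonneg (by linarith [hp.2] : (0:ℝ) ≤ 1 - p) n] : (0:ℝ) ≤ (1-p)^n * p)]
    congr 1
    rw [← ENNReal.ofReal_natCast, ← ENNReal.ofReal_pow (by positivity)]
    congr 1
    push_cast; ring
  rw [tsum_congr this, ← ENNReal.ofReal_tsum_of_nonneg
      (fun n => geom_nonneg hp n 2) (geom_summable hp 2)]
  rw [(geom_sum_aux hp).2]
  have h1 : (2 - p) / p ^ 2 ≤ 2 * (1 / p) ^ 2 := by
    obtain ⟨hp0, hp1⟩ := hp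
    rw [div_le_iff₀ (by positivity)]
    field_simp
    nlinarith
  calc ENNReal.ofReal ((2 - p) / p ^ 2) ≤ ENNReal.ofReal (2 * (1/p)^2) :=
        ENNReal.ofReal_le_ofReal h1
    _ = 2 * ENNReal.ofReal (1 / p) ^ 2 := by
        have hp0 := hp.1
        rw [ENNReal.ofReal_mul (by norm_num), ENNReal.ofReal_pow (by positivity)]
        norm_num

/-- Let `m ≥ 2` and let `Y_1, …, Y_m` be independent random variables with
`Y_i ~ Geom(p_i)`, `p_i ∈ (0,1]`. Then
`P(Y_1 + ⋯ + Y_m > m² / (4 (p_1 + ⋯ + p_m))) ≥ 1/9`. -/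
theorem geom_sum_concentration
    {Ω : Type*} [MeasurableSpace Ω] (μ : Measure Ω) [IsProbabilityMeasure μ]
    (m : ℕ) (hm : 2 ≤ m) (p : Fin m → ℝ) (hp : ∀ i, p i ∈ Set.Ioc (0 : ℝ) 1)
    (Y : Fin m → Ω → ℕ) (hYmeas : ∀ i, Measurable (Y i))
    (hindep : iIndepFun Y μ)
    (hdist : ∀ i, Measure.map (Y i) μ = geomMeasure (p i)) :
    (1 : ENNReal) / 9 ≤
      μ {ω | (m : ℝ) ^ 2 / (4 * ∑ i, p i) < ((∑ i, Y i ω : ℕ) : ℝ)} := by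
  classical
  have hmpos : 0 < m := by omega
  haveI : Nonempty (Fin m) := ⟨⟨0, hmpos⟩⟩
  set S : ℝ := ∑ i, p i with hSdef
  have hSpos : 0 < S :=
    Finset.sum_pos (fun i _ => (hp i).1) Finset.univ_nonempty
  set T : ℝ := (m : ℝ) ^ 2 / (4 * S) with hTdef
  have hT0 : 0 ≤ T := by positivity
  set H : ℝ := ∑ i, 1 / p i with hHdef
  have hHpos : 0 < H := Finset.sum_pos (fun i _ => by
    have := (hp i).1; positivity) Finset.univ_nonempty
  -- Cauchy–Schwarz : m^2 ≤ S * H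
  have hCS0 : (m : ℝ) ^ 2 ≤ S * H := by
    have h := Finset.sum_mul_sq_le_sq_mul_sq Finset.univ
      (fun i => Real.sqrt (p i)) (fun i => (Real.sqrt (p i))⁻¹)
    have h1 : ∀ i : Fin m, Real.sqrt (p i) * (Real.sqrt (p i))⁻¹ = 1 := by
      intro i
      exact mul_inv_cancel₀ (ne_of_gt (Real.sqrt_pos.2 (hp i).1))
    have h2 : ∀ i : Fin m, Real.sqrt (p i) ^ 2 = p i :=
      fun i => Real.sq_sqrt (le_of_lt (hp i).1)
    have h3 : ∀ i : Fin m, ((Real.sqrt (p i))⁻¹) ^ 2 = 1 / p i := by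
      intro i
      rw [inv_pow, h2 i, one_div]
    simp only [h1, h2, h3] at h
    rw [hSdef, hHdef]
    simpa [Finset.card_univ, one_div] using h
  have hTH : T ≤ H / 4 := by
    rw [hTdef, div_le_iff₀ (by positivity)]
    calc (m:ℝ)^2 ≤ S * H := hCS0
      _ = H / 4 * (4 * S) := by ring
  -- the target event
  set Ev : Set Ω := {ω | T < ((∑ i, Y i ω : ℕ) : ℝ)} with hEvdef
  have hsum_meas : Measurable (fun ω => (∑ i, Y i ω : ℕ)) :=
    Finset.measurable_sum _ (fun i _ => hYmeas i)
  have hEv : MeasurableSet Ev :=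
    measurableSet_lt measurable_const (Measurable.comp .of_discrete hsum_meas)
  set X : Ω → ℝ≥0∞ := fun ω => ((∑ i, Y i ω : ℕ) : ℝ≥0∞) with hXdef
  have hX : Measurable X := Measurable.comp .of_discrete hsum_meas
  have hYcast : ∀ i, Measurable (fun ω => ((Y i ω : ℕ) : ℝ≥0∞)) :=
    fun i => Measurable.comp .of_discrete (hYmeas i)
  have hYcast2 : ∀ i j, Measurable (fun ω => ((Y i ω : ℕ) : ℝ≥0∞) * ((Y j ω : ℕ) : ℝ≥0∞)) :=
    fun i j => (hYcast i).mul (hYcast j)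
  set A : ℝ≥0∞ := ENNReal.ofReal H with hAdef
  have hAsum' : A = ∑ i, ENNReal.ofReal (1 / p i) := by
    rw [hAdef, hHdef, ENNReal.ofReal_sum_of_nonneg]
    intro i _
    have := (hp i).1; positivity
  -- per-variable first moments
  have hA1 : ∀ i, ∫⁻ ω, ((Y i ω : ℕ) : ℝ≥0∞) ∂μ = ENNReal.ofReal (1 / p i) := by
    intro i
    have := lintegral_map (μ := μ) (g := Y i) (f := fun k : ℕ => (k : ℝ≥0∞))
      .of_discrete (hYmeas i)
    rw [← this, hdist i, geom_moment1 (hp i)]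
  have hA2 : ∀ i, ∫⁻ ω, ((Y i ω : ℕ) : ℝ≥0∞) ^ 2 ∂μ ≤ 2 * ENNReal.ofReal (1 / p i) ^ 2 := by
    intro i
    have := lintegral_map (μ := μ) (g := Y i) (f := fun k : ℕ => (k : ℝ≥0∞) ^ 2)
      .of_discrete (hYmeas i)
    rw [← this, hdist i] at *
    exact geom_moment2 (hp i)
  -- expectation of X
  have hXsum : ∀ ω, X ω = ∑ i, ((Y i ω : ℕ) : ℝ≥0∞) := by
    intro ω; rw [hXdef]; push_cast; rfl
  have hEX : ∫⁻ ω, X ω ∂μ = A := by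
    rw [lintegral_congr hXsum, lintegral_finset_sum _ (fun i _ => hYcast i)]
    rw [hAsum']
    exact Finset.sum_congr rfl (fun i _ => hA1 i)
  -- second moment of X
  have hEX2 : ∫⁻ ω, X ω ^ 2 ∂μ ≤ 2 * A ^ 2 := by
    have hXsq : ∀ ω, X ω ^ 2 = ∑ i, ∑ j, ((Y i ω : ℝ≥0∞) * (Y j ω : ℝ≥0∞)) := by
      intro ω
      rw [hXsum ω, sq, Finset.sum_mul_sum]
    rw [lintegral_congr hXsq]
    rw [lintegral_finset_sum _ (fun i _ => Finset.measurable_sum _ (fun j _ => hYcast2 i j))]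
    have hinner : ∀ i : Fin m, ∫⁻ ω, (∑ j, ((Y i ω : ℝ≥0∞) * (Y j ω : ℝ≥0∞))) ∂μ
        = ∑ j, ∫⁻ ω, ((Y i ω : ℝ≥0∞) * (Y j ω : ℝ≥0∞)) ∂μ :=
      fun i => lintegral_finset_sum _ (fun j _ => hYcast2 i j)
    rw [Finset.sum_congr rfl (fun i _ => hinner i)]
    have hterm : ∀ i j : Fin m, ∫⁻ ω, ((Y i ω : ℝ≥0∞) * (Y j ω : ℝ≥0∞)) ∂μ
        ≤ 2 * (ENNReal.ofReal (1 / p i) * ENNReal.ofReal (1 / p j)) := by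
      intro i j
      rcases eq_or_ne i j with rfl | hij
      · calc ∫⁻ ω, ((Y i ω : ℝ≥0∞) * (Y i ω : ℝ≥0∞)) ∂μ
            = ∫⁻ ω, ((Y i ω : ℕ) : ℝ≥0∞) ^ 2 ∂μ := by
              apply lintegral_congr; intro ω; rw [sq]
          _ ≤ 2 * ENNReal.ofReal (1 / p i) ^ 2 := hA2 i
          _ = 2 * (ENNReal.ofReal (1 / p i) * ENNReal.ofReal (1 / p i)) := by rw [sq]
      · have hind : IndepFun (fun ω => ((Y i ω : ℕ) : ℝ≥0∞))
            (fun ω => ((Y j ω : ℕ) : ℝ≥0∞)) μ :=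
          (hindep.indepFun hij).comp (φ := fun k : ℕ => (k : ℝ≥0∞))
            (ψ := fun k : ℕ => (k : ℝ≥0∞)) .of_discrete .of_discrete
        have := lintegral_mul_eq_lintegral_mul_lintegral_of_indepFun
          (μ := μ) (f := fun ω => ((Y i ω : ℕ) : ℝ≥0∞))
          (g := fun ω => ((Y j ω : ℕ) : ℝ≥0∞))
          (hYcast i) (hYcast j) hind
        calc ∫⁻ ω, ((Y i ω : ℝ≥0∞) * (Y j ω : ℝ≥0∞)) ∂μ
            = ENNReal.ofReal (1 / p i) * ENNReal.ofReal (1 / p j) := by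
              rw [show (fun ω => ((Y i ω : ℝ≥0∞) * (Y j ω : ℝ≥0∞)))
                  = (fun ω => ((Y i ω : ℕ) : ℝ≥0∞)) * (fun ω => ((Y j ω : ℕ) : ℝ≥0∞)) from rfl,
                this, hA1 i, hA1 j]
          _ ≤ 2 * (ENNReal.ofReal (1 / p i) * ENNReal.ofReal (1 / p j)) := by
              nth_rewrite 1 [← one_mul (ENNReal.ofReal (1 / p i) * ENNReal.ofReal (1 / p j))]
              exact mul_le_mul_left (by norm_num) _
    calc ∑ i, ∑ j, ∫⁻ ω, ((Y i ω : ℝ≥0∞) * (Y j ω : ℝ≥0∞)) ∂μ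
        ≤ ∑ i, ∑ j, 2 * (ENNReal.ofReal (1 / p i) * ENNReal.ofReal (1 / p j)) :=
          Finset.sum_le_sum (fun i _ => Finset.sum_le_sum (fun j _ => hterm i j))
      _ = 2 * A ^ 2 := by
          rw [hAsum', sq, Finset.sum_mul_sum, Finset.mul_sum]
          exact Finset.sum_congr rfl (fun i _ => by rw [Finset.mul_sum])
  -- split of the expectation
  have hsplit : A ≤ ENNReal.ofReal T + ∫⁻ ω, Ev.indicator X ω ∂μ := by
    rw [← hEX]
    calc ∫⁻ ω, X ω ∂μ ≤ ∫⁻ ω, (ENNReal.ofReal T + Ev.indicator X ω) ∂μ := by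
          apply lintegral_mono
          intro ω
          show X ω ≤ ENNReal.ofReal T + Ev.indicator X ω
          by_cases hw : ω ∈ Ev
          · rw [Set.indicator_of_mem hw]; exact le_add_self
          · rw [Set.indicator_of_notMem hw, add_zero]
            have hle : ((∑ i, Y i ω : ℕ) : ℝ) ≤ T := not_lt.1 hw
            calc X ω = ENNReal.ofReal ((∑ i, Y i ω : ℕ) : ℝ) := by
                  rw [hXdef]; exact (ENNReal.ofReal_natCast _).symm
              _ ≤ ENNReal.ofReal T := ENNReal.ofReal_le_ofReal hle
      _ = ENNReal.ofReal T + ∫⁻ ω, Ev.indicator X ω ∂μ := by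
          rw [lintegral_add_left measurable_const, lintegral_const, measure_univ, mul_one]
  -- Cauchy–Schwarz for the indicator part
  have hCSint : ∫⁻ ω, Ev.indicator X ω ∂μ
      ≤ (∫⁻ ω, X ω ^ 2 ∂μ) ^ (1/2 : ℝ) * (μ Ev) ^ (1/2 : ℝ) := by
    have hconj : Real.HolderConjugate 2 2 := Real.HolderConjugate.two_two
    have h := ENNReal.lintegral_mul_le_Lp_mul_Lq μ hconj
      (f := X) (g := Ev.indicator (fun _ => (1 : ℝ≥0∞)))
      hX.aemeasurable ((measurable_const.indicator hEv).aemeasurable)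
    have e1 : ∀ ω, (X * Ev.indicator (fun _ => (1:ℝ≥0∞))) ω = Ev.indicator X ω := by
      intro ω
      by_cases hw : ω ∈ Ev <;>
        simp [hw, Set.indicator_of_mem, Set.indicator_of_notMem]
    have e2 : ∀ ω, X ω ^ (2:ℝ) = X ω ^ 2 := by
      intro ω; rw [← ENNReal.rpow_natCast (X ω) 2]; norm_num
    have e3 : ∀ ω, (Ev.indicator (fun _ => (1:ℝ≥0∞)) ω) ^ (2:ℝ)
        = Ev.indicator (fun _ => (1:ℝ≥0∞)) ω := by
      intro ω
      by_cases hw : ω ∈ Ev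
      · simp [hw]
      · simp [hw, ENNReal.zero_rpow_of_pos]
    rw [lintegral_congr e1] at h
    simp only [e2, e3] at h
    have h4 : ∫⁻ a, Ev.indicator (fun _ => (1:ℝ≥0∞)) a ∂μ = μ Ev := by
      rw [lintegral_indicator_const hEv, one_mul]
    rwa [h4] at h
  -- endgame
  by_contra hc
  push_neg at hc
  have hμEv : μ Ev ≤ 1/9 := le_of_lt hc
  have hAfin : A ≠ ⊤ := ENNReal.ofReal_ne_top
  have hApos : A ≠ 0 := by
    rw [hAdef]
    exact (ENNReal.ofReal_pos.2 hHpos).ne'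
  have h2half : ((2:ℝ≥0∞)) ^ (1/2:ℝ) ≤ 2 := by
    calc ((2:ℝ≥0∞)) ^ (1/2:ℝ) ≤ (2:ℝ≥0∞) ^ (1:ℝ) :=
          ENNReal.rpow_le_rpow_of_exponent_le one_le_two (by norm_num)
      _ = 2 := ENNReal.rpow_one 2
  have h9half : ((1/9:ℝ≥0∞)) ^ (1/2:ℝ) ≤ 3⁻¹ := by
    rw [show (1/9:ℝ≥0∞) = (3⁻¹)^(2:ℕ) by rw [← ENNReal.inv_pow]; norm_num,
      ← ENNReal.rpow_natCast ((3:ℝ≥0∞)⁻¹) 2, ← ENNReal.rpow_mul]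
    norm_num
  have hsqA : ((2:ℝ≥0∞) * A ^ 2) ^ (1/2:ℝ) ≤ 2 * A := by
    rw [ENNReal.mul_rpow_of_nonneg _ _ (by norm_num)]
    have hA2' : (A ^ 2 : ℝ≥0∞) ^ (1/2:ℝ) = A := by
      rw [← ENNReal.rpow_natCast A 2, ← ENNReal.rpow_mul]; norm_num
    rw [hA2']
    exact mul_le_mul_left h2half A
  have hTA : ENNReal.ofReal T ≤ A / 4 := by
    calc ENNReal.ofReal T ≤ ENNReal.ofReal (H/4) := ENNReal.ofReal_le_ofReal hTH
      _ = A / 4 := by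
          rw [hAdef, ENNReal.ofReal_div_of_pos (by norm_num)]
          norm_num
  have hmain : A ≤ A/4 + 2*A*3⁻¹ := by
    calc A ≤ ENNReal.ofReal T + ∫⁻ ω, Ev.indicator X ω ∂μ := hsplit
      _ ≤ ENNReal.ofReal T + (∫⁻ ω, X ω ^ 2 ∂μ) ^ (1/2:ℝ) * (μ Ev) ^ (1/2:ℝ) :=
          add_le_add_right hCSint _
      _ ≤ A/4 + ((2:ℝ≥0∞) * A ^ 2) ^ (1/2:ℝ) * ((1/9:ℝ≥0∞)) ^ (1/2:ℝ) :=
          add_le_add hTA (mul_le_mul' (ENNReal.rpow_le_rpow hEX2 (by norm_num))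
            (ENNReal.rpow_le_rpow hμEv (by norm_num)))
      _ ≤ A/4 + 2*A*3⁻¹ := add_le_add_right (mul_le_mul' hsqA h9half) _
  have h1 : A/4 ≠ ⊤ := by simp [ENNReal.div_eq_top, hAfin]
  have h2 : 2*A*3⁻¹ ≠ ⊤ :=
    ENNReal.mul_ne_top (ENNReal.mul_ne_top (by norm_num) hAfin) (by norm_num)
  have key : (A/4 + 2*A*3⁻¹).toReal = A.toReal/4 + 2*A.toReal*3⁻¹ := by
    rw [ENNReal.toReal_add h1 h2, ENNReal.toReal_div, ENNReal.toReal_mul, ENNReal.toReal_mul]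
    norm_num
  have hadd_ne : A/4 + 2*A*3⁻¹ ≠ ⊤ := ENNReal.add_ne_top.2 ⟨h1, h2⟩
  have hreal : A.toReal ≤ A.toReal/4 + 2*A.toReal*3⁻¹ :=
    key ▸ (ENNReal.toReal_le_toReal hAfin hadd_ne).2 hmain
  have hApos' : 0 < A.toReal := ENNReal.toReal_pos hApos hAfin
  linarith
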